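/- Let n ≥ 2 be an integer. The identity p_n(x_1, …, x_n) + p_n(y_1, …, y_n) ≈ p_n(x_1, …, x_{n−1}, y_n) + p_n(y_1, …, y_{n−1}, x_n) is satisfied by the path graph semiring S_{p_n}, but fails in the graph semiring of the disjoint union of two paths with n vertices each (the {0, ω}-direct union S_{p_n} ∘ S_{p_n}). -/

import Mathlib

universe u

-- The underlying set of the graph semiring of a graph with vertex set `V`:
-- the vertices together with two extra elements `0` and `ω`.
inductive GS (V : Type u) : Type u where
  | zero : GS V
  | omega : GS V
  | vert : V → GS V

-- Multiplication of the graph semiring: `x·y = ω` if `x, y` are vertices joined by an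
-- edge, and `x·y = 0` otherwise.
open Classical in
noncomputable def gsMul {V : Type u} (E : V → V → Prop) : GS V → GS V → GS V
  | GS.vert a, GS.vert b => if E a b then GS.omega else GS.zero
  | _, _ => GS.zero

-- The flat addition of the graph semiring: `a + b = a` if `a = b`, else `0`.
open Classical in
noncomputable def gsAdd {V : Type u} (a b : GS V) : GS V :=
  if a = b then a else GS.zero

-- `gsSum f n = f 0 + f 1 + ⋯ + f n` (a sum of `n + 1` terms).
noncomputable def gsSum {V : Type u} (f : ℕ → GS V) : ℕ → GS V
  | 0 => f 0
  | n + 1 => gsAdd (gsSum f n) (f (n + 1))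

-- `E` is a graph (in the sense of the paper): a directed graph with no isolated
-- vertices in which every vertex has out-degree at most 1 and in-degree at most 1.
def IsGraph {V : Type u} (E : V → V → Prop) : Prop :=
  (∀ v : V, ∃ u : V, E v u ∨ E u v) ∧
  (∀ v a b : V, E v a → E v b → a = b) ∧
  (∀ v a b : V, E a v → E b v → a = b)

-- `v 0, v 1, …, v (m - 1)` is a path of the graph `E` with `m` vertices.
def IsPathOn {V : Type u} (E : V → V → Prop) (m : ℕ) (v : ℕ → V) : Prop :=
  (∀ i < m, ∀ j < m, v i = v j → i = j) ∧
  (∀ i : ℕ, i + 1 < m → E (v i) (v (i + 1)))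

-- `v 0, v 1, …, v (m - 1)` is a cycle of the graph `E` of length `m`.
def IsCycleOn {V : Type u} (E : V → V → Prop) (m : ℕ) (v : ℕ → V) : Prop :=
  1 ≤ m ∧
  (∀ i < m, ∀ j < m, v i = v j → i = j) ∧
  (∀ i : ℕ, i + 1 < m → E (v i) (v (i + 1))) ∧
  E (v (m - 1)) (v 0)

-- The value of the term `p_n(x_1, …, x_n) = x_1x_2 + x_2x_3 + ⋯ + x_{n-1}x_n` in the
-- graph semiring, under the assignment `x_{i+1} ↦ g i` (for `n ≥ 2`).
noncomputable def pTerm {V : Type u} (E : V → V → Prop) (g : ℕ → GS V) (n : ℕ) : GS V :=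
  gsSum (fun i => gsMul E (g i) (g (i + 1))) (n - 2)

-- The graph semiring of `E` satisfies the identity `p_n ≈ c_n`, i.e. for all
-- `x_1, …, x_n`: `x_1x_2 + ⋯ + x_{n-1}x_n = x_1x_2 + ⋯ + x_{n-1}x_n + x_nx_1`.
def satPC {V : Type u} (E : V → V → Prop) (n : ℕ) : Prop :=
  ∀ g : ℕ → GS V,
    pTerm E g n = gsAdd (pTerm E g n) (gsMul E (g (n - 1)) (g 0))

-- The edge relation of the path with vertices `a_1, …, a_n` (as `Fin n`).
def pathE (n : ℕ) : Fin n → Fin n → Prop := fun i j => (j : ℕ) = (i : ℕ) + 1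

-- The edge relation of the disjoint union of two paths with `n` vertices each.
def pathE2 (n : ℕ) : Bool × Fin n → Bool × Fin n → Prop :=
  fun p q => p.1 = q.1 ∧ (q.2 : ℕ) = (p.2 : ℕ) + 1

-- The graph semiring of `E` satisfies the identity
-- `p_n(x_1,…,x_n) + p_n(y_1,…,y_n) ≈ p_n(x_1,…,x_{n-1},y_n) + p_n(y_1,…,y_{n-1},x_n)`,
-- where `x_{i+1} ↦ g i` and `y_{i+1} ↦ h i`.
def satSwapId {V : Type u} (E : V → V → Prop) (n : ℕ) : Prop :=
  ∀ g h : ℕ → GS V,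
    gsAdd (pTerm E g n) (pTerm E h n) =
      gsAdd (pTerm E (fun i => if i = n - 1 then h i else g i) n)
            (pTerm E (fun i => if i = n - 1 then g i else h i) n)

lemma gsAdd_zero_left {V : Type u} (x : GS V) : gsAdd GS.zero x = GS.zero := by
  unfold gsAdd; split <;> simp_all

lemma gsAdd_zero_right {V : Type u} (x : GS V) : gsAdd x GS.zero = GS.zero := by
  unfold gsAdd; split <;> simp_all

lemma gsMul_zo {V : Type u} (E : V → V → Prop) (a b : GS V) :
    gsMul E a b = GS.zero ∨ gsMul E a b = GS.omega := by
  cases a <;> cases b <;> simp [gsMul] <;> tauto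

lemma gsMul_eq_omega {V : Type u} (E : V → V → Prop) (x y : GS V) :
    gsMul E x y = GS.omega ↔ ∃ a b, x = GS.vert a ∧ y = GS.vert b ∧ E a b := by
  cases x <;> cases y <;> simp [gsMul]

lemma gsSum_omega {V : Type u} (f : ℕ → GS V) (n : ℕ)
    (h : ∀ i ≤ n, f i = GS.omega) : gsSum f n = GS.omega := by
  induction n with
  | zero => exact h 0 le_rfl
  | succ n ih =>
    show gsAdd (gsSum f n) (f (n + 1)) = GS.omega
    rw [ih (fun i hi => h i (by omega)), h (n + 1) le_rfl]
    simp [gsAdd]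

lemma gsSum_zero {V : Type u} (f : ℕ → GS V) (n : ℕ)
    (hf : ∀ i ≤ n, f i = GS.zero ∨ f i = GS.omega)
    (h : ¬ ∀ i ≤ n, f i = GS.omega) : gsSum f n = GS.zero := by
  induction n with
  | zero =>
    have h0 : f 0 = GS.zero := by
      rcases hf 0 le_rfl with h1 | h1
      · exact h1
      · exact absurd (fun i hi => by rw [Nat.le_zero.1 hi]; exact h1) h
    exact h0
  | succ n ih =>
    show gsAdd (gsSum f n) (f (n + 1)) = GS.zero
    by_cases hall : ∀ i ≤ n, f i = GS.omega
    · have h1 : f (n + 1) = GS.zero := by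
        rcases hf (n + 1) le_rfl with h1 | h1
        · exact h1
        · refine absurd (fun i hi => ?_) h
          rcases Nat.lt_or_ge i (n + 1) with hi' | hi'
          · exact hall i (by omega)
          · have : i = n + 1 := by omega
            rw [this]; exact h1
      rw [gsSum_omega f n hall, h1]
      exact gsAdd_zero_right _
    · rw [ih (fun i hi => hf i (by omega)) hall]
      exact gsAdd_zero_left _

lemma pTerm_eq_omega {V : Type u} (E : V → V → Prop) (g : ℕ → GS V) (n : ℕ) :
    pTerm E g n = GS.omega ↔ ∀ i ≤ n - 2, gsMul E (g i) (g (i + 1)) = GS.omega := by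
  constructor
  · intro h
    by_contra hc
    rw [pTerm.eq_def, gsSum_zero _ _ (fun i _ => gsMul_zo E _ _) hc] at h
    exact nomatch h
  · intro h; exact gsSum_omega _ _ h

lemma pTerm_zo {V : Type u} (E : V → V → Prop) (g : ℕ → GS V) (n : ℕ) :
    pTerm E g n = GS.zero ∨ pTerm E g n = GS.omega := by
  by_cases h : ∀ i ≤ n - 2, gsMul E (g i) (g (i + 1)) = GS.omega
  · exact Or.inr ((pTerm_eq_omega E g n).2 h)
  · exact Or.inl (gsSum_zero _ _ (fun i _ => gsMul_zo E _ _) h)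

lemma gsAdd_zo_zero {V : Type u} {a b : GS V} (ha : a = GS.zero ∨ a = GS.omega)
    (hb : b = GS.zero ∨ b = GS.omega) (h : ¬(a = GS.omega ∧ b = GS.omega)) :
    gsAdd a b = GS.zero := by
  rcases ha with rfl | rfl <;> rcases hb with rfl | rfl <;> simp_all [gsAdd]

lemma path_char (n : ℕ) (hn : 2 ≤ n) (g : ℕ → GS (Fin n))
    (H : ∀ i ≤ n - 2, gsMul (pathE n) (g i) (g (i + 1)) = GS.omega) :
    ∀ i, (hi : i ≤ n - 1) → g i = GS.vert ⟨i, by omega⟩ := by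
  have hv : ∀ i ≤ n - 2, ∃ a b : Fin n, g i = GS.vert a ∧ g (i + 1) = GS.vert b ∧
      (b : ℕ) = (a : ℕ) + 1 := by
    intro i hi
    obtain ⟨a, b, h1, h2, h3⟩ := (gsMul_eq_omega _ _ _).1 (H i hi)
    exact ⟨a, b, h1, h2, h3⟩
  obtain ⟨a0, b0, h0, -, -⟩ := hv 0 (by omega)
  have step : ∀ i, i ≤ n - 1 → ∃ a : Fin n, g i = GS.vert a ∧ (a : ℕ) = (a0 : ℕ) + i := by
    intro i
    induction i with
    | zero => intro _; exact ⟨a0, h0, by simp⟩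
    | succ i ih =>
      intro hi
      obtain ⟨a, ha, hav⟩ := ih (by omega)
      obtain ⟨a', b, h1, h2, h3⟩ := hv i (by omega)
      rw [ha] at h1
      have haa : a = a' := by injection h1
      subst haa
      exact ⟨b, h2, by omega⟩
  have ha0 : (a0 : ℕ) = 0 := by
    obtain ⟨a, -, hav⟩ := step (n - 1) le_rfl
    have := a.isLt
    omega
  intro i hi
  obtain ⟨a, hga, hav⟩ := step i hi
  rw [hga]
  congr 1
  refine Fin.ext ?_
  show (a : ℕ) = i
  omega

lemma sat_path (n : ℕ) (hn : 2 ≤ n) : satSwapId (pathE n) n := by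
  have key : ∀ g : ℕ → GS (Fin n),
      pTerm (pathE n) g n = GS.omega ↔ ∀ i, (hi : i ≤ n - 1) → g i = GS.vert ⟨i, by omega⟩ := by
    intro g
    rw [pTerm_eq_omega]
    constructor
    · exact path_char n hn g
    · intro H i hi
      rw [gsMul_eq_omega]
      exact ⟨⟨i, by omega⟩, ⟨i + 1, by omega⟩, H i (by omega), H (i + 1) (by omega), rfl⟩
  intro g h
  have hiff : (pTerm (pathE n) g n = GS.omega ∧ pTerm (pathE n) h n = GS.omega) ↔
      (pTerm (pathE n) (fun i => if i = n - 1 then h i else g i) n = GS.omega ∧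
       pTerm (pathE n) (fun i => if i = n - 1 then g i else h i) n = GS.omega) := by
    rw [key, key, key, key]
    constructor
    · rintro ⟨hg, hh⟩
      refine ⟨fun i hi => ?_, fun i hi => ?_⟩
      · by_cases hi1 : i = n - 1
        · subst hi1; rw [if_pos rfl]; exact hh _ le_rfl
        · rw [if_neg hi1]; exact hg i hi
      · by_cases hi1 : i = n - 1
        · subst hi1; rw [if_pos rfl]; exact hg _ le_rfl
        · rw [if_neg hi1]; exact hh i hi
    · rintro ⟨hg', hh'⟩
      refine ⟨fun i hi => ?_, fun i hi => ?_⟩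
      · by_cases hi1 : i = n - 1
        · subst hi1
          have := hh' _ le_rfl
          rwa [if_pos rfl] at this
        · have := hg' i hi
          rwa [if_neg hi1] at this
      · by_cases hi1 : i = n - 1
        · subst hi1
          have := hg' _ le_rfl
          rwa [if_pos rfl] at this
        · have := hh' i hi
          rwa [if_neg hi1] at this
  by_cases hc : pTerm (pathE n) g n = GS.omega ∧ pTerm (pathE n) h n = GS.omega
  · obtain ⟨h1, h2⟩ := hc
    obtain ⟨h3, h4⟩ := hiff.1 ⟨h1, h2⟩
    rw [h1, h2, h3, h4]
  · have hc' := (not_iff_not.2 hiff).1 hc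
    rw [gsAdd_zo_zero (pTerm_zo _ _ _) (pTerm_zo _ _ _) hc,
      gsAdd_zo_zero (pTerm_zo _ _ _) (pTerm_zo _ _ _) hc']

lemma not_sat_path2 (n : ℕ) (hn : 2 ≤ n) : ¬ satSwapId (pathE2 n) n := by
  intro hs
  have hnpos : 0 < n := by omega
  set g : ℕ → GS (Bool × Fin n) :=
    fun i => GS.vert (false, ⟨i % n, Nat.mod_lt _ hnpos⟩) with hgdef
  set h : ℕ → GS (Bool × Fin n) :=
    fun i => GS.vert (true, ⟨i % n, Nat.mod_lt _ hnpos⟩) with hhdef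
  have hg : pTerm (pathE2 n) g n = GS.omega := by
    rw [pTerm_eq_omega]
    intro i hi
    rw [gsMul_eq_omega]
    refine ⟨_, _, rfl, rfl, rfl, ?_⟩
    show (i + 1) % n = i % n + 1
    rw [Nat.mod_eq_of_lt (by omega), Nat.mod_eq_of_lt (by omega)]
  have hh : pTerm (pathE2 n) h n = GS.omega := by
    rw [pTerm_eq_omega]
    intro i hi
    rw [gsMul_eq_omega]
    refine ⟨_, _, rfl, rfl, rfl, ?_⟩
    show (i + 1) % n = i % n + 1
    rw [Nat.mod_eq_of_lt (by omega), Nat.mod_eq_of_lt (by omega)]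
  have hg' : pTerm (pathE2 n) (fun i => if i = n - 1 then h i else g i) n = GS.zero := by
    refine gsSum_zero _ _ (fun i _ => gsMul_zo _ _ _) ?_
    intro hall
    have := hall (n - 2) le_rfl
    have hne : ¬ (n - 2 = n - 1) := by omega
    have heq : n - 2 + 1 = n - 1 := by omega
    rw [gsMul_eq_omega] at this
    obtain ⟨a, b, h1, h2, h3⟩ := this
    simp only [if_neg hne, heq, if_pos rfl] at h1 h2
    rw [hgdef] at h1
    rw [hhdef] at h2
    injection h1 with h1
    injection h2 with h2
    rw [← h1, ← h2] at h3
    exact Bool.noConfusion h3.1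
  have := hs g h
  rw [hg, hh, hg'] at this
  rw [gsAdd_zero_left] at this
  have : GS.omega (V := Bool × Fin n) = GS.zero := by
    rw [← this]; simp [gsAdd]
  exact nomatch this

/-- For `n ≥ 2`, the identity
`p_n(x_1,…,x_n) + p_n(y_1,…,y_n) ≈ p_n(x_1,…,x_{n-1},y_n) + p_n(y_1,…,y_{n-1},x_n)`
holds in the path graph semiring `S_{p_n}` but fails in the graph semiring of the
disjoint union of two paths with `n` vertices each (`S_{p_n} ∘ S_{p_n}`). -/
theorem stmt_15 (n : ℕ) (hn : 2 ≤ n) :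
    satSwapId (pathE n) n ∧ ¬ satSwapId (pathE2 n) n :=
  ⟨sat_path n hn, not_sat_path2 n hn⟩
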